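/- Let (Y, δ) be a Borel pseudo-metric space, Y_0 ⊆ Y_1 ⊆ Y_2 ⊆ ⋯ a sequence of Borel subsets of Y, let (X_n, d_n), n ∈ ℕ, be a sequence of separable Borel pseudo-metric spaces, and let p, q ∈ [1, +∞). Suppose there are constants A, C, D > 0, a point y* ∈ ∏_{n∈ℕ} Y_n, a sequence of Borel maps T_n : X_n → ℓ_q((Y_n)_{n∈ℕ}, y*), and a sequence of non-negative reals (ε_n) such that: (1) ∑_n ε_n^p < +∞; (2) for u, v ∈ X_n, d_n(u,v) ≥ C implies δ_q(T_n(u), T_n(v)) ≥ D; (3) ε_n ≤ d_n(u,v) < C implies A^{-1} d_n(u,v)^{p/q} ≤ δ_q(T_n(u), T_n(v)) ≤ A d_n(u,v)^{p/q}. Then E((X_n)_{n∈ℕ}; p) is Borel reducible to E((Y_n)_{n∈ℕ}; q). -/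

import Mathlib

/-- A pseudo-metric on a set `X`. -/
structure IsPseudometric {X : Type*} (d : X → X → ℝ) : Prop where
  nonneg : ∀ x y, 0 ≤ d x y
  refl : ∀ x, d x x = 0
  symm : ∀ x y, d x y = d y x
  triangle : ∀ x y z, d x z ≤ d x y + d y z

/-- `E` is Borel reducible to `F` (w.r.t. the Borel σ-algebras of the topologies). -/
def BorelReducible {α β : Type*} [TopologicalSpace α] [TopologicalSpace β]
    (E : α → α → Prop) (F : β → β → Prop) : Prop :=
  ∃ θ : α → β, @Measurable α β (borel α) (borel β) θ ∧ ∀ x y, E x y ↔ F (θ x) (θ y)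

section Aux

lemma rpow_add_le_two_rpow {a b p : ℝ} (ha : 0 ≤ a) (hb : 0 ≤ b) (hp : 0 ≤ p) :
    (a + b) ^ p ≤ 2 ^ p * (a ^ p + b ^ p) := by
  have h1 : a + b ≤ 2 * max a b := by
    rcases max_cases a b with ⟨hm, h⟩ | ⟨hm, h⟩ <;> rw [hm] <;> linarith
  have hm0 : 0 ≤ max a b := le_max_of_le_left ha
  calc (a + b) ^ p ≤ (2 * max a b) ^ p :=
        Real.rpow_le_rpow (by positivity) h1 hp
    _ = 2 ^ p * (max a b) ^ p := Real.mul_rpow (by norm_num) hm0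
    _ ≤ 2 ^ p * (a ^ p + b ^ p) := by
        apply mul_le_mul_of_nonneg_left _ (Real.rpow_nonneg (by norm_num) p)
        rcases max_cases a b with ⟨hm, h⟩ | ⟨hm, h⟩ <;> rw [hm]
        · nlinarith [Real.rpow_nonneg hb p]
        · nlinarith [Real.rpow_nonneg ha p]

lemma measurable_iff_borel {α β : Type*} [TopologicalSpace α] [TopologicalSpace β]
    [mα : MeasurableSpace α] [mβ : MeasurableSpace β] [BorelSpace α] [BorelSpace β]
    (f : α → β) : Measurable f ↔ @Measurable α β (borel α) (borel β) f := by
  rw [(‹BorelSpace α›).measurable_eq, (‹BorelSpace β›).measurable_eq]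

lemma exists_discretization {X : Type*} [TopologicalSpace X] [MeasurableSpace X] [BorelSpace X]
    (d : X → X → ℝ) (hd : IsPseudometric d)
    (hdm : Measurable fun pr : X × X => d pr.1 pr.2)
    (S : Set X) (hS : S.Countable)
    (hdense : ∀ u : X, ∀ e : ℝ, 0 < e → ∃ v ∈ S, d u v < e)
    (ε : ℝ) (hε : 0 ≤ ε) :
    ∃ φ : X → X, Measurable φ ∧ (∀ u, d u (φ u) ≤ 2 * ε) ∧
      (∀ u v, φ u = φ v ∨ ε ≤ d (φ u) (φ v)) := by
  classical
  rcases hε.eq_or_lt with hε0 | hεpos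
  · refine ⟨id, measurable_id, fun u => ?_, fun u v => Or.inr (hε0 ▸ hd.nonneg _ _)⟩
    simp [← hε0, (hd.refl u).le]
  rcases isEmpty_or_nonempty X with hX | hX
  · exact ⟨id, measurable_id, fun u => isEmptyElim u, fun u => isEmptyElim u⟩
  -- enumerate the dense set
  obtain ⟨u0⟩ := hX
  obtain ⟨v0, hv0, -⟩ := hdense u0 1 one_pos
  obtain ⟨s, hs⟩ := hS.exists_eq_range ⟨v0, hv0⟩
  -- greedy ε-separated subset
  let F : ℕ → Finset ℕ := fun k => Nat.rec (∅ : Finset ℕ)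
    (fun k Fk => @ite _ (∀ j ∈ Fk, ε ≤ d (s j) (s k)) (Classical.propDecidable _)
      (insert k Fk) Fk) k
  have hF0 : F 0 = ∅ := rfl
  have hFsucc : ∀ k, F (k + 1) =
      @ite _ (∀ j ∈ F k, ε ≤ d (s j) (s k)) (Classical.propDecidable _)
        (insert k (F k)) (F k) := fun k => rfl
  have hF_lt : ∀ k j, j ∈ F k → (j < k ∧ j ∈ F (j + 1)) := by
    intro k
    induction k with
    | zero => simp [hF0]
    | succ k ih =>
      intro j hj
      rw [hFsucc] at hj
      rcases Classical.em (∀ j ∈ F k, ε ≤ d (s j) (s k)) with hc | hc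
      · rw [if_pos hc] at hj
        rcases Finset.mem_insert.1 hj with rfl | hj''
        · refine ⟨Nat.lt_succ_self _, ?_⟩
          rw [hFsucc, if_pos hc]; exact Finset.mem_insert_self _ _
        · obtain ⟨h1, h2⟩ := ih j hj''
          exact ⟨h1.trans (Nat.lt_succ_self _), h2⟩
      · rw [if_neg hc] at hj
        obtain ⟨h1, h2⟩ := ih j hj
        exact ⟨h1.trans (Nat.lt_succ_self _), h2⟩
  have hF_mono : Monotone F := by
    apply monotone_nat_of_le_succ
    intro k
    rw [hFsucc]
    rcases Classical.em (∀ j ∈ F k, ε ≤ d (s j) (s k)) with hc | hc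
    · rw [if_pos hc]; exact Finset.subset_insert _ _
    · rw [if_neg hc]
  set R : ℕ → Prop := fun k => k ∈ F (k + 1) with hR
  -- separation
  have hsep' : ∀ j k, R j → R k → j ≠ k → ε ≤ d (s j) (s k) := by
    have key : ∀ j k, j < k → R j → R k → ε ≤ d (s j) (s k) := by
      intro j k hjk hRj hRk
      have hcond : ∀ i ∈ F k, ε ≤ d (s i) (s k) := by
        by_contra hc
        have hRk' : k ∈ F (k + 1) := hRk
        rw [hFsucc, if_neg hc] at hRk'
        exact absurd (hF_lt _ _ hRk').1 (lt_irrefl k)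
      exact hcond j (hF_mono hjk hRj)
    intro j k hRj hRk hne
    rcases lt_or_gt_of_ne hne with h | h
    · exact key j k h hRj hRk
    · exact (hd.symm (s j) (s k)) ▸ key k j h hRk hRj
  -- covering
  have hcover : ∀ u : X, ∃ k, R k ∧ d u (s k) < 2 * ε := by
    intro u
    obtain ⟨v, hvS, hv⟩ := hdense u ε hεpos
    obtain ⟨j, rfl⟩ := by rw [hs] at hvS; exact hvS
    by_cases hRj : R j
    · exact ⟨j, hRj, hv.trans_le (by linarith)⟩
    · have hc : ¬ (∀ i ∈ F j, ε ≤ d (s i) (s j)) := by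
        intro hc
        apply hRj
        show j ∈ F (j + 1)
        rw [hFsucc, if_pos hc]
        exact Finset.mem_insert_self _ _
      push_neg at hc
      obtain ⟨i, hiF, hid⟩ := hc
      refine ⟨i, (hF_lt _ _ hiF).2, ?_⟩
      calc d u (s i) ≤ d u (s j) + d (s j) (s i) := hd.triangle _ _ _
        _ < ε + ε := by rw [hd.symm (s j) (s i)]; exact add_lt_add hv hid
        _ = 2 * ε := by ring
  set ψ : X → ℕ := fun u => Nat.find (hcover u) with hψ
  have hdmeas : ∀ c : X, Measurable fun u => d u c := fun c =>
    hdm.comp (measurable_id.prodMk measurable_const)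
  have hRset : ∀ j : ℕ, MeasurableSet {w : X | R j} := by
    intro j
    by_cases h : R j
    · simp [h]
    · simp [h]
  have hdset : ∀ j : ℕ, MeasurableSet {w : X | d w (s j) < 2 * ε} :=
    fun j => (hdmeas (s j)) measurableSet_Iio
  have hψm : Measurable ψ := by
    apply measurable_to_countable'
    intro k
    have hset : ψ ⁻¹' {k} = ({w : X | R k} ∩ {w : X | d w (s k) < 2 * ε}) ∩
        ⋂ j, ⋂ (_ : j < k), (({w : X | R j} ∩ {w : X | d w (s j) < 2 * ε})ᶜ) := by
      ext w
      simp only [Set.mem_preimage, Set.mem_singleton_iff, Set.mem_inter_iff,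
        Set.mem_setOf_eq, Set.mem_iInter, Set.mem_compl_iff, not_and, hψ]
      rw [Nat.find_eq_iff]
      constructor
      · rintro ⟨⟨h1, h2⟩, h3⟩
        exact ⟨⟨h1, h2⟩, fun j hj hRj hdj => h3 j hj ⟨hRj, hdj⟩⟩
      · rintro ⟨⟨h1, h2⟩, h3⟩
        exact ⟨⟨h1, h2⟩, fun j hj hc => h3 j hj hc.1 hc.2⟩
    rw [hset]
    exact ((hRset k).inter (hdset k)).inter
      (MeasurableSet.iInter fun j => MeasurableSet.iInter fun _ =>
        ((hRset j).inter (hdset j)).compl)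
  refine ⟨fun u => s (ψ u), measurable_from_top.comp hψm, ?_, ?_⟩
  · intro u
    exact (Nat.find_spec (hcover u)).2.le
  · intro u v
    by_cases h : ψ u = ψ v
    · exact Or.inl (congrArg s h)
    · exact Or.inr (hsep' _ _ (Nat.find_spec (hcover u)).1 (Nat.find_spec (hcover v)).1 h)

theorem stmt1
    {Y : Type*} [TopologicalSpace Y] [PolishSpace Y]
    (δ : Y → Y → ℝ) (hδ : IsPseudometric δ)
    (hδBorel : @Measurable (Y × Y) ℝ (borel (Y × Y)) (borel ℝ) fun pr => δ pr.1 pr.2)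
    (Yset : ℕ → Set Y)
    (hYBorel : ∀ n, @MeasurableSet Y (borel Y) (Yset n))
    (hYmono : ∀ n, Yset n ⊆ Yset (n + 1))
    {X : ℕ → Type*} [∀ n, TopologicalSpace (X n)] [∀ n, PolishSpace (X n)]
    (d : ∀ n, X n → X n → ℝ) (hd : ∀ n, IsPseudometric (d n))
    (hdBorel : ∀ n,
      @Measurable (X n × X n) ℝ (borel (X n × X n)) (borel ℝ) fun pr => d n pr.1 pr.2)
    -- each pseudo-metric space `(X n, d n)` is separable:
    (hsep : ∀ n, ∃ S : Set (X n), S.Countable ∧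
      ∀ u : X n, ∀ e : ℝ, 0 < e → ∃ v ∈ S, d n u v < e)
    (p q : ℝ) (hp : 1 ≤ p) (hq : 1 ≤ q)
    (A C D : ℝ) (hA : 0 < A) (hC : 0 < C) (hD : 0 < D)
    (ystar : ℕ → Y) (hystar : ∀ n, ystar n ∈ Yset n)
    (T : ∀ n, X n → ℕ → Y)
    (hTmem : ∀ n u m, T n u m ∈ Yset m)
    (hTlq : ∀ n u, Summable fun m => δ (T n u m) (ystar m) ^ q)
    (hTBorel : ∀ n, @Measurable (X n) (ℕ → Y) (borel (X n)) (borel (ℕ → Y)) (T n))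
    (ε : ℕ → ℝ) (hε : ∀ n, 0 ≤ ε n)
    (h1 : Summable fun n => ε n ^ p)
    (h2 : ∀ n u v, C ≤ d n u v →
      D ≤ (∑' m, δ (T n u m) (T n v m) ^ q) ^ (1 / q))
    (h3 : ∀ n u v, ε n ≤ d n u v → d n u v < C →
      A⁻¹ * d n u v ^ (p / q) ≤ (∑' m, δ (T n u m) (T n v m) ^ q) ^ (1 / q) ∧
      (∑' m, δ (T n u m) (T n v m) ^ q) ^ (1 / q) ≤ A * d n u v ^ (p / q)) :
    BorelReducible
      (fun x y : ∀ n, X n => Summable fun n => d n (x n) (y n) ^ p)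
      (fun x y : ∀ n, Yset n => Summable fun n => δ (x n : Y) (y n : Y) ^ q) := by
  classical
  letI mY : MeasurableSpace Y := borel Y
  haveI hbY : BorelSpace Y := ⟨rfl⟩
  letI mX : ∀ n, MeasurableSpace (X n) := fun n => borel (X n)
  haveI hbX : ∀ n, BorelSpace (X n) := fun n => ⟨rfl⟩
  have hp0 : (0 : ℝ) < p := lt_of_lt_of_le one_pos hp
  have hq0 : (0 : ℝ) < q := lt_of_lt_of_le one_pos hq
  have hqne : q ≠ 0 := ne_of_gt hq0
  -- transported measurability hypotheses
  have hdBorel' : ∀ n, Measurable fun pr : X n × X n => d n pr.1 pr.2 := fun n =>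
    (measurable_iff_borel _).2 (hdBorel n)
  have hT' : ∀ n, Measurable (T n) := fun n => (measurable_iff_borel _).2 (hTBorel n)
  -- discretization maps
  have hphi : ∀ n, ∃ φ : X n → X n, Measurable φ ∧ (∀ u, d n u (φ u) ≤ 2 * ε n) ∧
      (∀ u v, φ u = φ v ∨ ε n ≤ d n (φ u) (φ v)) := by
    intro n
    obtain ⟨S, hSc, hSd⟩ := hsep n
    exact exists_discretization (d n) (hd n) (hdBorel' n) S hSc hSd (ε n) (hε n)
  choose φ hφm hφd hφsep using hphi
  have hYm : ∀ {a b : ℕ}, a ≤ b → Yset a ⊆ Yset b := fun {a b} h =>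
    monotone_nat_of_le_succ (f := Yset) hYmono h
  refine ⟨fun x k => ⟨T (Nat.unpair k).1 (φ (Nat.unpair k).1 (x (Nat.unpair k).1))
      (Nat.unpair k).2, hYm (Nat.unpair_right_le k) (hTmem _ _ _)⟩, ?_, ?_⟩
  · -- measurability
    refine (measurable_iff_borel _).mp ?_
    rw [measurable_pi_iff]
    intro k
    apply Measurable.subtype_mk
    exact (measurable_pi_apply _).comp ((hT' _).comp ((hφm _).comp (measurable_pi_apply _)))
  · -- the reduction property
    intro x y
    show (Summable fun n => d n (x n) (y n) ^ p) ↔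
      Summable fun k => δ
        (T (Nat.unpair k).1 (φ (Nat.unpair k).1 (x (Nat.unpair k).1)) (Nat.unpair k).2)
        (T (Nat.unpair k).1 (φ (Nat.unpair k).1 (y (Nat.unpair k).1)) (Nat.unpair k).2) ^ q
    set u : ∀ n, X n := fun n => φ n (x n) with hu
    set v : ∀ n, X n := fun n => φ n (y n) with hv
    -- fiberwise summability
    have hfib : ∀ n, Summable fun m => δ (T n (u n) m) (T n (v n) m) ^ q := by
      intro n
      refine Summable.of_nonneg_of_le (fun m => Real.rpow_nonneg (hδ.nonneg _ _) q)
        (fun m => ?_) (((hTlq n (u n)).add (hTlq n (v n))).mul_left (2 ^ q))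
      · have htri : δ (T n (u n) m) (T n (v n) m) ≤
            δ (T n (u n) m) (ystar m) + δ (T n (v n) m) (ystar m) := by
          calc δ (T n (u n) m) (T n (v n) m) ≤
              δ (T n (u n) m) (ystar m) + δ (ystar m) (T n (v n) m) := hδ.triangle _ _ _
            _ = δ (T n (u n) m) (ystar m) + δ (T n (v n) m) (ystar m) := by
                rw [hδ.symm (ystar m)]
        calc δ (T n (u n) m) (T n (v n) m) ^ q ≤
            (δ (T n (u n) m) (ystar m) + δ (T n (v n) m) (ystar m)) ^ q :=
              Real.rpow_le_rpow (hδ.nonneg _ _) htri hq0.le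
          _ ≤ 2 ^ q * (δ (T n (u n) m) (ystar m) ^ q + δ (T n (v n) m) (ystar m) ^ q) :=
              rpow_add_le_two_rpow (hδ.nonneg _ _) (hδ.nonneg _ _) hq0.le
    -- reformulate the right-hand side as a double series
    have hRHS : (Summable fun k => δ
        (T (Nat.unpair k).1 (u (Nat.unpair k).1) (Nat.unpair k).2)
        (T (Nat.unpair k).1 (v (Nat.unpair k).1) (Nat.unpair k).2) ^ q) ↔
        Summable fun n => ∑' m, δ (T n (u n) m) (T n (v n) m) ^ q := by
      rw [← Nat.pairEquiv.summable_iff]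
      have hcomp : ((fun k => δ
          (T (Nat.unpair k).1 (u (Nat.unpair k).1) (Nat.unpair k).2)
          (T (Nat.unpair k).1 (v (Nat.unpair k).1) (Nat.unpair k).2) ^ q) ∘ Nat.pairEquiv) =
          fun nm : ℕ × ℕ => δ (T nm.1 (u nm.1) nm.2) (T nm.1 (v nm.1) nm.2) ^ q := by
        funext nm
        obtain ⟨n, m⟩ := nm
        simp only [Function.comp_apply, Nat.pairEquiv, Equiv.coe_fn_mk,
          Function.uncurry_apply_pair]
        show δ (T (Nat.unpair (Nat.pair n m)).1 (u (Nat.unpair (Nat.pair n m)).1) (Nat.unpair (Nat.pair n m)).2) (T (Nat.unpair (Nat.pair n m)).1 (v (Nat.unpair (Nat.pair n m)).1) (Nat.unpair (Nat.pair n m)).2) ^ q = _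
        rw [Nat.unpair_pair]
      rw [hcomp, summable_prod_of_nonneg
        (Pi.le_def.mpr fun nm => Real.rpow_nonneg (hδ.nonneg _ _) q)]
      exact and_iff_right hfib
    rw [hRHS]
    -- main comparison
    set a : ℕ → ℝ := fun n => d n (x n) (y n) with ha
    set s : ℕ → ℝ := fun n => d n (u n) (v n) with hs
    set B : ℕ → ℝ := fun n => ∑' m, δ (T n (u n) m) (T n (v n) m) ^ q with hB
    have ha0 : ∀ n, 0 ≤ a n := fun n => (hd n).nonneg _ _
    have hs0 : ∀ n, 0 ≤ s n := fun n => (hd n).nonneg _ _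
    have hB0 : ∀ n, 0 ≤ B n := fun n =>
      tsum_nonneg fun m => Real.rpow_nonneg (hδ.nonneg _ _) q
    have hBq : ∀ n, (B n ^ (1/q)) ^ q = B n := by
      intro n
      rw [← Real.rpow_mul (hB0 n), one_div_mul_cancel hqne, Real.rpow_one]
    have hs_le : ∀ n, s n ≤ a n + 4 * ε n := by
      intro n
      have t1 : d n (x n) (u n) ≤ 2 * ε n := hφd n (x n)
      have t2 : d n (y n) (v n) ≤ 2 * ε n := hφd n (y n)
      have tr1 : s n ≤ d n (u n) (x n) + d n (x n) (v n) := (hd n).triangle _ _ _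
      have tr2 : d n (x n) (v n) ≤ d n (x n) (y n) + d n (y n) (v n) := (hd n).triangle _ _ _
      have sy : d n (u n) (x n) = d n (x n) (u n) := (hd n).symm _ _
      linarith
    have ha_le : ∀ n, a n ≤ s n + 4 * ε n := by
      intro n
      have t1 : d n (x n) (u n) ≤ 2 * ε n := hφd n (x n)
      have t2 : d n (y n) (v n) ≤ 2 * ε n := hφd n (y n)
      have tr1 : a n ≤ d n (x n) (u n) + d n (u n) (y n) := (hd n).triangle _ _ _
      have tr2 : d n (u n) (y n) ≤ d n (u n) (v n) + d n (v n) (y n) := (hd n).triangle _ _ _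
      have sy : d n (v n) (y n) = d n (y n) (v n) := (hd n).symm _ _
      linarith
    have hBeq0 : ∀ n, u n = v n → B n = 0 := by
      intro n h
      rw [hB]
      simp only [h]
      have : ∀ m, δ (T n (v n) m) (T n (v n) m) ^ q = 0 := fun m => by
        rw [hδ.refl, Real.zero_rpow hqne]
      simp only [this, tsum_zero]
    constructor
    · -- forward
      intro h
      have hta := h.tendsto_atTop_zero
      have htε := h1.tendsto_atTop_zero
      have h8 : (0:ℝ) < (C/8) ^ p := Real.rpow_pos_of_pos (by linarith) p
      have hev : ∀ᶠ n in Filter.atTop, a n + 4 * ε n < C := by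
        filter_upwards [hta.eventually_lt_const h8, htε.eventually_lt_const h8] with n h1' h2'
        have hac : a n < C / 8 := by
          by_contra hcon
          push_neg at hcon
          exact absurd (Real.rpow_le_rpow (by linarith) hcon hp0.le) (not_le.mpr h1')
        have hec : ε n < C / 8 := by
          by_contra hcon
          push_neg at hcon
          exact absurd (Real.rpow_le_rpow (by linarith) hcon hp0.le) (not_le.mpr h2')
        linarith
      apply Summable.of_norm_bounded_eventually
        (g := fun n => A ^ q * (2 ^ p * (a n ^ p + 4 ^ p * ε n ^ p)))
        (((h.add (h1.mul_left (4 ^ p))).mul_left (2 ^ p)).mul_left (A ^ q))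
      rw [Nat.cofinite_eq_atTop]
      filter_upwards [hev] with n hn
      rw [Real.norm_of_nonneg (hB0 n)]
      rcases hφsep n (x n) (y n) with heq | hsep2
      · rw [hBeq0 n heq]
        have := Real.rpow_nonneg (ha0 n) p
        have := Real.rpow_nonneg (hε n) p
        positivity
      · have hsC : s n < C := lt_of_le_of_lt (hs_le n) hn
        have h3' := (h3 n (u n) (v n) hsep2 hsC).2
        have hBle : B n ≤ A ^ q * s n ^ p := by
          have hb0 : 0 ≤ B n ^ (1/q) := Real.rpow_nonneg (hB0 n) _
          calc B n = (B n ^ (1/q)) ^ q := (hBq n).symm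
            _ ≤ (A * s n ^ (p/q)) ^ q := Real.rpow_le_rpow hb0 h3' hq0.le
            _ = A ^ q * (s n ^ (p/q)) ^ q := Real.mul_rpow hA.le (Real.rpow_nonneg (hs0 n) _)
            _ = A ^ q * s n ^ p := by
                rw [← Real.rpow_mul (hs0 n), div_mul_cancel₀ p hqne]
        calc B n ≤ A ^ q * s n ^ p := hBle
          _ ≤ A ^ q * (a n + 4 * ε n) ^ p :=
              mul_le_mul_of_nonneg_left
                (Real.rpow_le_rpow (hs0 n) (hs_le n) hp0.le) (Real.rpow_nonneg hA.le q)
          _ ≤ A ^ q * (2 ^ p * (a n ^ p + (4 * ε n) ^ p)) :=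
              mul_le_mul_of_nonneg_left
                (rpow_add_le_two_rpow (ha0 n) (mul_nonneg (by norm_num) (hε n)) hp0.le)
                (Real.rpow_nonneg hA.le q)
          _ = A ^ q * (2 ^ p * (a n ^ p + 4 ^ p * ε n ^ p)) := by
              rw [Real.mul_rpow (by norm_num) (hε n)]
    · -- backward
      intro h
      have htB := h.tendsto_atTop_zero
      have hev : ∀ᶠ n in Filter.atTop, B n < D ^ q :=
        htB.eventually_lt_const (Real.rpow_pos_of_pos hD q)
      apply Summable.of_norm_bounded_eventually
        (g := fun n => 2 ^ p * (A ^ q * B n + 4 ^ p * ε n ^ p))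
        (((h.mul_left (A ^ q)).add (h1.mul_left (4 ^ p))).mul_left (2 ^ p))
      rw [Nat.cofinite_eq_atTop]
      filter_upwards [hev] with n hn
      rw [Real.norm_of_nonneg (Real.rpow_nonneg (ha0 n) p)]
      have h2p : (1:ℝ) ≤ 2 ^ p := by
        have := Real.rpow_le_rpow_of_exponent_le (by norm_num : (1:ℝ) ≤ 2) hp0.le
        rwa [Real.rpow_zero] at this
      rcases hφsep n (x n) (y n) with heq | hsep2
      · have haε : a n ≤ 4 * ε n := by
          have t1 : d n (x n) (u n) ≤ 2 * ε n := hφd n (x n)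
          have t2 : d n (y n) (v n) ≤ 2 * ε n := hφd n (y n)
          have tr1 : a n ≤ d n (x n) (u n) + d n (u n) (y n) := (hd n).triangle _ _ _
          have heq' : u n = v n := heq
          have huy : d n (u n) (y n) = d n (y n) (v n) := by
            rw [heq']; exact (hd n).symm _ _
          linarith
        have hq1 : a n ^ p ≤ 4 ^ p * ε n ^ p := by
          calc a n ^ p ≤ (4 * ε n) ^ p := Real.rpow_le_rpow (ha0 n) haε hp0.le
            _ = 4 ^ p * ε n ^ p := Real.mul_rpow (by norm_num) (hε n)
        have hAB : 0 ≤ A ^ q * B n :=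
          mul_nonneg (Real.rpow_nonneg hA.le q) (hB0 n)
        have ht' : (0:ℝ) ≤ 4 ^ p * ε n ^ p :=
          mul_nonneg (Real.rpow_nonneg (by norm_num) p) (Real.rpow_nonneg (hε n) p)
        calc a n ^ p ≤ 4 ^ p * ε n ^ p := hq1
          _ = 1 * (4 ^ p * ε n ^ p) := (one_mul _).symm
          _ ≤ 2 ^ p * (A ^ q * B n + 4 ^ p * ε n ^ p) :=
              mul_le_mul h2p (le_add_of_nonneg_left hAB) ht' (le_trans zero_le_one h2p)
      · have hsC : s n < C := by
          by_contra hcon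
          push_neg at hcon
          have hb := h2 n (u n) (v n) hcon
          have : D ^ q ≤ B n := by
            calc D ^ q ≤ (B n ^ (1/q)) ^ q := Real.rpow_le_rpow hD.le hb hq0.le
              _ = B n := hBq n
          linarith
        have h3' := (h3 n (u n) (v n) hsep2 hsC).1
        have hsp : s n ^ p ≤ A ^ q * B n := by
          have hmul : s n ^ (p/q) ≤ A * B n ^ (1/q) := by
            rwa [inv_mul_le_iff₀ hA] at h3'
          calc s n ^ p = (s n ^ (p/q)) ^ q := by
                rw [← Real.rpow_mul (hs0 n), div_mul_cancel₀ p hqne]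
            _ ≤ (A * B n ^ (1/q)) ^ q :=
                Real.rpow_le_rpow (Real.rpow_nonneg (hs0 n) _) hmul hq0.le
            _ = A ^ q * (B n ^ (1/q)) ^ q :=
                Real.mul_rpow hA.le (Real.rpow_nonneg (hB0 n) _)
            _ = A ^ q * B n := by rw [hBq n]
        calc a n ^ p ≤ (s n + 4 * ε n) ^ p :=
              Real.rpow_le_rpow (ha0 n) (ha_le n) hp0.le
          _ ≤ 2 ^ p * (s n ^ p + (4 * ε n) ^ p) :=
              rpow_add_le_two_rpow (hs0 n) (mul_nonneg (by norm_num) (hε n)) hp0.le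
          _ = 2 ^ p * (s n ^ p + 4 ^ p * ε n ^ p) := by
              rw [Real.mul_rpow (by norm_num) (hε n)]
          _ ≤ 2 ^ p * (A ^ q * B n + 4 ^ p * ε n ^ p) := by
              apply mul_le_mul_of_nonneg_left _ (Real.rpow_nonneg (by norm_num) p)
              linarith
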